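/- For all real numbers γ, U with 0 < γ < 1 and 0 < U < 1, and every real τ ≥ 0, the series ∑_{n=0}^∞ (γ^τ·(1-U))^n · U converges to U / (1 - γ^τ·(1-U)), and this sum satisfies ∑_{n=0}^∞ (γ^τ·(1-U))^n · U ≥ γ^(τ/U). -/

import Mathlib

theorem stmt_1 (γ U τ : ℝ) (hγ0 : 0 < γ) (hγ1 : γ < 1) (hU0 : 0 < U) (hU1 : U < 1)
    (hτ : 0 ≤ τ) :
    HasSum (fun n : ℕ => (γ ^ τ * (1 - U)) ^ n * U) (U / (1 - γ ^ τ * (1 - U))) ∧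
    ∑' n : ℕ, (γ ^ τ * (1 - U)) ^ n * U ≥ γ ^ (τ / U) := by
  set g : ℝ := γ ^ τ with hg
  have hg0 : 0 < g := Real.rpow_pos_of_pos hγ0 τ
  have hg1 : g ≤ 1 := Real.rpow_le_one hγ0.le hγ1.le hτ
  set x : ℝ := g * (1 - U) with hx
  have hx0 : 0 ≤ x := mul_nonneg hg0.le (by linarith)
  have hx1 : x < 1 := lt_of_le_of_lt (by nlinarith : x ≤ 1 - U) (by linarith)
  have hsum : HasSum (fun n : ℕ => x ^ n * U) (U / (1 - x)) := by
    have := (hasSum_geometric_of_lt_one hx0 hx1).mul_right U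
    rwa [inv_mul_eq_div] at this
  refine ⟨hsum, ?_⟩
  rw [hsum.tsum_eq]
  have hxlt : 0 < 1 - x := by linarith
  set a : ℝ := (1 - g) * (1 - U) / U with ha
  have ha0 : 0 ≤ a := div_nonneg (mul_nonneg (by linarith) (by linarith)) hU0.le
  have hexp : 1 - x ≤ U * Real.exp a := by
    have h1 : 1 + a ≤ Real.exp a := by linarith [Real.add_one_le_exp a]
    have h2 : U * (1 + a) ≤ U * Real.exp a := by nlinarith
    have heq : U * (1 + a) = 1 - x := by
      rw [ha, hx]
      field_simp
      ring
    linarith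
  have key1 : Real.exp (-a) ≤ U / (1 - x) := by
    rw [le_div_iff₀ hxlt]
    have hprod : Real.exp (-a) * Real.exp a = 1 := by
      rw [← Real.exp_add]; simp
    nlinarith [Real.exp_pos (-a), Real.exp_pos a]
  have key2 : γ ^ (τ / U) ≤ Real.exp (-a) := by
    have hlog : Real.log g ≤ g - 1 := Real.log_le_sub_one_of_pos hg0
    have hrw : γ ^ (τ / U) = Real.exp (Real.log g * (1 / U)) := by
      rw [div_eq_mul_one_div, Real.rpow_mul hγ0.le, ← hg,
        Real.rpow_def_of_pos hg0]
    rw [hrw, Real.exp_le_exp]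
    have h3 : Real.log g * (1 / U) ≤ (g - 1) * (1 / U) :=
      mul_le_mul_of_nonneg_right hlog (by positivity)
    have h4 : (g - 1) * (1 / U) ≤ -a := by
      rw [ha, mul_one_div, ← neg_div]
      gcongr
      nlinarith [mul_nonneg (sub_nonneg.mpr hg1) hU0.le]
    linarith
  linarith
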